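/- There exists a constant C > 0 such that for all t > 0 and all integers n ≥ 1, μ( { x ∈ [0,1] : κ( ℰ_n(x), μ ) > t + C·n^{−1/4} } ) ≤ D / (n·t²). -/

import Mathlib

open MeasureTheory Set Filter Topology

/-- The Kantorovich distance between two probability measures on `[0,1]`
(encoded as measures on `ℝ`): `κ(μ₁,μ₂) = sup {∫ g d(μ₁ - μ₂) : g 1-Lipschitz}`. -/
noncomputable def kantorovichDist (μ₁ μ₂ : MeasureTheory.Measure ℝ) : ℝ :=
  sSup {r : ℝ | ∃ g : ℝ → ℝ, LipschitzWith 1 g ∧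
    r = (∫ ξ, g ξ ∂μ₁) - (∫ ξ, g ξ ∂μ₂)}

/-- The empirical measure `ℰ_n(x) = (1/n) ∑_{j=0}^{n-1} δ_{T^j x}`. -/
noncomputable def empiricalMeasure (T : ℝ → ℝ) (n : ℕ) (x : ℝ) :
    MeasureTheory.Measure ℝ :=
  ((n : ENNReal))⁻¹ • ∑ j ∈ Finset.range n, MeasureTheory.Measure.dirac (T^[j] x)

namespace EmpAux

/-- The Kantorovich functional as a function of the orbit points. -/
noncomputable def Kfun (μ : Measure ℝ) (n : ℕ) (z : Fin n → ℝ) : ℝ :=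
  sSup {r : ℝ | ∃ g : ℝ → ℝ, LipschitzWith 1 g ∧
    r = (∑ i, g (z i)) / n - ∫ ξ, g ξ ∂μ}

lemma lip_abs_sub {g : ℝ → ℝ} (hg : LipschitzWith 1 g) (a b : ℝ) :
    |g a - g b| ≤ |a - b| := by
  have := hg.dist_le_mul a b
  simpa [Real.dist_eq] using this

lemma lip_integrable {μ : Measure ℝ} [IsProbabilityMeasure μ]
    (hsupp : ∀ᵐ ξ ∂μ, ξ ∈ Icc (0:ℝ) 1) {g : ℝ → ℝ} (hg : LipschitzWith 1 g) :
    Integrable g μ := by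
  refine (integrable_const (|g 0| + 1)).mono' hg.continuous.aestronglyMeasurable ?_
  filter_upwards [hsupp] with ξ hξ
  have h1 : |g ξ - g 0| ≤ |ξ - 0| := lip_abs_sub hg ξ 0
  have h2 : |ξ| ≤ 1 := abs_le.2 ⟨by linarith [hξ.1], hξ.2⟩
  rw [Real.norm_eq_abs]
  calc |g ξ| ≤ |g ξ - g 0| + |g 0| := by
        have := abs_add_le (g ξ - g 0) (g 0); simpa using this
    _ ≤ |g 0| + 1 := by rw [sub_zero] at h1; linarith

lemma zero_mem_K (μ : Measure ℝ) (n : ℕ) (z : Fin n → ℝ) :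
    (0:ℝ) ∈ {r : ℝ | ∃ g : ℝ → ℝ, LipschitzWith 1 g ∧
      r = (∑ i, g (z i)) / n - ∫ ξ, g ξ ∂μ} := by
  refine ⟨fun _ => 0, ?_, by simp⟩
  exact (LipschitzWith.const 0).weaken (zero_le_one)

lemma elem_le_K {μ : Measure ℝ} [IsProbabilityMeasure μ]
    (hsupp : ∀ᵐ ξ ∂μ, ξ ∈ Icc (0:ℝ) 1) {n : ℕ} (hn : 1 ≤ n) (z : Fin n → ℝ)
    {r : ℝ} (hr : r ∈ {r : ℝ | ∃ g : ℝ → ℝ, LipschitzWith 1 g ∧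
      r = (∑ i, g (z i)) / n - ∫ ξ, g ξ ∂μ}) :
    r ≤ (∑ i, |z i|) / n + 1 := by
  obtain ⟨g, hg, rfl⟩ := hr
  have hnR : (0:ℝ) < (n:ℝ) := by exact_mod_cast hn
  have hup : ∀ i, g (z i) ≤ g 0 + |z i| := by
    intro i
    have := lip_abs_sub hg (z i) 0
    rw [sub_zero] at this
    have := abs_le.1 this
    linarith [this.2]
  have hsum : (∑ i, g (z i)) ≤ (n:ℝ) * g 0 + ∑ i, |z i| := by
    calc (∑ i, g (z i)) ≤ ∑ i, (g 0 + |z i|) := Finset.sum_le_sum fun i _ => hup i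
      _ = (n:ℝ) * g 0 + ∑ i, |z i| := by
          rw [Finset.sum_add_distrib]; simp [Finset.card_univ, mul_comm]
  have hint : g 0 - 1 ≤ ∫ ξ, g ξ ∂μ := by
    have hmono : ∫ ξ, (g 0 - 1 : ℝ) ∂μ ≤ ∫ ξ, g ξ ∂μ := by
      refine integral_mono_ae (integrable_const _) (lip_integrable hsupp hg) ?_
      filter_upwards [hsupp] with ξ hξ
      have h1 := (abs_le.1 (lip_abs_sub hg ξ 0)).1
      have h2 : |ξ - 0| ≤ 1 := by rw [sub_zero]; exact abs_le.2 ⟨by linarith [hξ.1], hξ.2⟩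
      nlinarith [abs_nonneg (ξ - 0)]
    simpa using hmono
  have : (∑ i, g (z i)) / n ≤ g 0 + (∑ i, |z i|) / n := by
    rw [div_le_iff₀ hnR]
    calc (∑ i, g (z i)) ≤ (n:ℝ) * g 0 + ∑ i, |z i| := hsum
      _ = (g 0 + (∑ i, |z i|) / n) * n := by field_simp
  linarith

lemma bddAbove_K {μ : Measure ℝ} [IsProbabilityMeasure μ]
    (hsupp : ∀ᵐ ξ ∂μ, ξ ∈ Icc (0:ℝ) 1) {n : ℕ} (hn : 1 ≤ n) (z : Fin n → ℝ) :
    BddAbove {r : ℝ | ∃ g : ℝ → ℝ, LipschitzWith 1 g ∧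
      r = (∑ i, g (z i)) / n - ∫ ξ, g ξ ∂μ} :=
  ⟨(∑ i, |z i|) / n + 1, fun _ hr => elem_le_K hsupp hn z hr⟩

lemma Kfun_nonneg {μ : Measure ℝ} [IsProbabilityMeasure μ]
    (hsupp : ∀ᵐ ξ ∂μ, ξ ∈ Icc (0:ℝ) 1) {n : ℕ} (hn : 1 ≤ n) (z : Fin n → ℝ) :
    0 ≤ Kfun μ n z :=
  le_csSup (bddAbove_K hsupp hn z) (zero_mem_K μ n z)

lemma Kfun_le_two {μ : Measure ℝ} [IsProbabilityMeasure μ]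
    (hsupp : ∀ᵐ ξ ∂μ, ξ ∈ Icc (0:ℝ) 1) {n : ℕ} (hn : 1 ≤ n) {z : Fin n → ℝ}
    (hz : ∀ i, z i ∈ Icc (0:ℝ) 1) : Kfun μ n z ≤ 2 := by
  have hnR : (0:ℝ) < (n:ℝ) := by exact_mod_cast hn
  refine csSup_le ⟨0, zero_mem_K μ n z⟩ fun r hr => ?_
  refine (elem_le_K hsupp hn z hr).trans ?_
  have : (∑ i, |z i|) ≤ (n:ℝ) := by
    calc (∑ i, |z i|) ≤ ∑ _i : Fin n, (1:ℝ) :=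
          Finset.sum_le_sum fun i _ => abs_le.2 ⟨by linarith [(hz i).1], (hz i).2⟩
      _ = (n:ℝ) := by simp
  have : (∑ i, |z i|) / n ≤ 1 := by rw [div_le_one hnR]; exact this
  linarith

lemma Kfun_sub_le {μ : Measure ℝ} [IsProbabilityMeasure μ]
    (hsupp : ∀ᵐ ξ ∂μ, ξ ∈ Icc (0:ℝ) 1) {n : ℕ} (hn : 1 ≤ n) (z zz : Fin n → ℝ) :
    Kfun μ n z ≤ Kfun μ n zz + (∑ i, |z i - zz i|) / n := by
  refine csSup_le ⟨0, zero_mem_K μ n z⟩ ?_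
  rintro r ⟨g, hg, rfl⟩
  have hnR : (0:ℝ) < (n:ℝ) := by exact_mod_cast hn
  have hmem : ((∑ i, g (zz i)) / n - ∫ ξ, g ξ ∂μ) ≤ Kfun μ n zz :=
    le_csSup (bddAbove_K hsupp hn zz) ⟨g, hg, rfl⟩
  have hdiff : (∑ i, g (z i)) / n - (∑ i, g (zz i)) / n ≤ (∑ i, |z i - zz i|) / n := by
    rw [div_sub_div_same, ← Finset.sum_sub_distrib]
    apply div_le_div_of_nonneg_right ?_ hnR.le

    calc (∑ i, (g (z i) - g (zz i))) ≤ ∑ i, |g (z i) - g (zz i)| :=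
          Finset.sum_le_sum fun i _ => le_abs_self _
      _ ≤ ∑ i, |z i - zz i| := Finset.sum_le_sum fun i _ => lip_abs_sub hg _ _
  linarith

lemma abs_Kfun_sub {μ : Measure ℝ} [IsProbabilityMeasure μ]
    (hsupp : ∀ᵐ ξ ∂μ, ξ ∈ Icc (0:ℝ) 1) {n : ℕ} (hn : 1 ≤ n) (z zz : Fin n → ℝ) :
    |Kfun μ n z - Kfun μ n zz| ≤ (∑ i, |z i - zz i|) / n := by
  rw [abs_sub_le_iff]
  constructor
  · linarith [Kfun_sub_le hsupp hn z zz]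
  · have := Kfun_sub_le hsupp hn zz z
    have heq : (∑ i, |zz i - z i|) = ∑ i, |z i - zz i| := by
      apply Finset.sum_congr rfl; intro i _; exact abs_sub_comm _ _
    rw [heq] at this; linarith

lemma Kfun_lipschitz {μ : Measure ℝ} [IsProbabilityMeasure μ]
    (hsupp : ∀ᵐ ξ ∂μ, ξ ∈ Icc (0:ℝ) 1) {n : ℕ} (hn : 1 ≤ n) :
    LipschitzWith 1 (Kfun μ n) := by
  apply LipschitzWith.of_dist_le_mul
  intro z zz
  have hnR : (0:ℝ) < (n:ℝ) := by exact_mod_cast hn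
  rw [Real.dist_eq, NNReal.coe_one, one_mul]
  refine (abs_Kfun_sub hsupp hn z zz).trans ?_
  rw [div_le_iff₀ hnR]
  calc (∑ i, |z i - zz i|) ≤ ∑ _i : Fin n, dist z zz := by
        refine Finset.sum_le_sum fun i _ => ?_
        have := dist_le_pi_dist z zz i
        rwa [Real.dist_eq] at this
    _ = dist z zz * n := by simp [Finset.card_univ, mul_comm]

lemma Kfun_comp_lip {μ : Measure ℝ} [IsProbabilityMeasure μ]
    (hsupp : ∀ᵐ ξ ∂μ, ξ ∈ Icc (0:ℝ) 1) {n : ℕ} (hn : 1 ≤ n)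
    (j : Fin n) (z zz : Fin n → ℝ) (hzz : ∀ i, i ≠ j → z i = zz i) :
    |Kfun μ n z - Kfun μ n zz| ≤ (1 / n) * |z j - zz j| := by
  refine (abs_Kfun_sub hsupp hn z zz).trans_eq ?_
  have : (∑ i, |z i - zz i|) = |z j - zz j| := by
    rw [Finset.sum_eq_single j]
    · intro i _ hij; rw [hzz i hij]; simp
    · simp
  rw [this]; ring


/-- tent/ramp function on `[k/m,(k+1)/m]`. -/
noncomputable def ψ (m k : ℕ) (y : ℝ) : ℝ := min (max (y - k / m) 0) (1 / m)

lemma ψ_lip (m k : ℕ) : LipschitzWith 1 (ψ m k) := by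
  have h1 : LipschitzWith 1 (fun y : ℝ => y - k / m) := by
    apply LipschitzWith.of_dist_le_mul
    intro a b
    simp [Real.dist_eq]
  exact (h1.max_const 0).min_const (1 / m)

lemma ψ_nonneg (m k : ℕ) (y : ℝ) : 0 ≤ ψ m k y :=
  le_min (le_max_right _ 0) (by positivity)

lemma ψ_le (m k : ℕ) (y : ℝ) : ψ m k y ≤ 1 / m := min_le_right _ _

lemma ψ_continuous (m k : ℕ) : Continuous (ψ m k) := (ψ_lip m k).continuous

lemma ψ_eq_zero {m k : ℕ} {y : ℝ} (h : y ≤ k / m) : ψ m k y = 0 := by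
  unfold ψ
  rw [max_eq_right (by linarith), min_eq_left (by positivity)]

lemma ψ_eq_full {m k : ℕ} {y : ℝ} (h : ((k:ℝ) + 1) / m ≤ y) : ψ m k y = 1 / m := by
  unfold ψ
  have hm : (0:ℝ) ≤ 1 / m := by positivity
  have : (1:ℝ) / m ≤ y - k / m := by
    have : ((k:ℝ) + 1) / m = k / m + 1 / m := by ring
    linarith [this ▸ h]
  rw [max_eq_left (by linarith), min_eq_right this]

lemma ψ_eq_mid {m k : ℕ} {y : ℝ} (h1 : (k:ℝ) / m ≤ y) (h2 : y ≤ ((k:ℝ) + 1) / m) :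
    ψ m k y = y - k / m := by
  unfold ψ
  have : y - (k:ℝ) / m ≤ 1 / m := by
    have : ((k:ℝ) + 1) / m = k / m + 1 / m := by ring
    linarith [this ▸ h2]
  rw [max_eq_left (by linarith), min_eq_left this]

/-- piecewise-linear interpolation of `g` on the grid `{k/m}`. -/
noncomputable def Ghat (m : ℕ) (g : ℝ → ℝ) (y : ℝ) : ℝ :=
  g 0 + ∑ k ∈ Finset.range m, (m * (g (((k:ℝ) + 1) / m) - g ((k:ℝ) / m))) * ψ m k y

lemma lip_abs_sub' {g : ℝ → ℝ} (hg : LipschitzWith 1 g) (a b : ℝ) :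
    |g a - g b| ≤ |a - b| := by
  have := hg.dist_le_mul a b
  simpa [Real.dist_eq] using this

lemma slope_abs_le {m : ℕ} (hm : 1 ≤ m) {g : ℝ → ℝ} (hg : LipschitzWith 1 g) (k : ℕ) :
    |(m : ℝ) * (g (((k:ℝ) + 1) / m) - g ((k:ℝ) / m))| ≤ 1 := by
  have hmR : (0:ℝ) < (m:ℝ) := by exact_mod_cast hm
  rw [abs_mul, abs_of_pos hmR]
  have h := lip_abs_sub' hg (((k:ℝ) + 1) / m) ((k:ℝ) / m)
  have : |((k:ℝ) + 1) / m - (k:ℝ) / m| = 1 / m := by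
    rw [div_sub_div_same]
    simp [abs_of_pos, hmR]
  rw [this] at h
  calc (m:ℝ) * |g (((k:ℝ) + 1) / m) - g ((k:ℝ) / m)| ≤ (m:ℝ) * (1 / m) :=
        mul_le_mul_of_nonneg_left h hmR.le
    _ = 1 := by field_simp

/-- The interpolation error bound: `|g y - Ghat m g y| ≤ 2/m` on `[0,1]`. -/
lemma interp_err {m : ℕ} (hm : 1 ≤ m) {g : ℝ → ℝ} (hg : LipschitzWith 1 g)
    {y : ℝ} (hy : y ∈ Icc (0:ℝ) 1) : |g y - Ghat m g y| ≤ 2 / m := by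
  have hmR : (0:ℝ) < (m:ℝ) := by exact_mod_cast hm
  set j : ℕ := min ⌊y * m⌋₊ (m - 1) with hjdef
  have hjm : j < m := lt_of_le_of_lt (min_le_right _ _) (by omega)
  have hy0 : 0 ≤ y * m := mul_nonneg hy.1 hmR.le
  have h1 : (j:ℝ) / m ≤ y := by
    rw [div_le_iff₀ hmR]
    calc (j:ℝ) ≤ (⌊y * m⌋₊ : ℝ) := by exact_mod_cast min_le_left _ _
      _ ≤ y * m := Nat.floor_le hy0
  have h2 : y ≤ ((j:ℝ) + 1) / m := by
    rcases le_total (⌊y * m⌋₊) (m - 1) with hc | hc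
    · have hj : j = ⌊y * m⌋₊ := min_eq_left hc
      rw [le_div_iff₀ hmR, hj]
      have := Nat.lt_floor_add_one (y * m)
      linarith
    · have hj : j = m - 1 := min_eq_right hc
      have : ((j:ℝ) + 1) / m = 1 := by
        rw [hj]
        have : ((m - 1 : ℕ) : ℝ) = (m:ℝ) - 1 := by
          have := Nat.cast_sub hm (R := ℝ); simpa using this
        rw [this]; field_simp; ring
      rw [this]; exact hy.2
  -- evaluate Ghat at y
  have hGhat : Ghat m g y = g ((j:ℝ) / m)
      + (m * (g (((j:ℝ) + 1) / m) - g ((j:ℝ) / m))) * (y - (j:ℝ) / m) := by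
    unfold Ghat
    have hsplit : ∑ k ∈ Finset.range m,
        (m * (g (((k:ℝ) + 1) / m) - g ((k:ℝ) / m))) * ψ m k y
        = (∑ k ∈ Finset.range j,
            (m * (g (((k:ℝ) + 1) / m) - g ((k:ℝ) / m))) * ψ m k y)
          + (m * (g (((j:ℝ) + 1) / m) - g ((j:ℝ) / m))) * ψ m j y
          + ∑ k ∈ Finset.Ico (j+1) m,
            (m * (g (((k:ℝ) + 1) / m) - g ((k:ℝ) / m))) * ψ m k y := by
      rw [Finset.range_eq_Ico, ← Finset.sum_Ico_consecutive _ (Nat.zero_le (j+1)) hjm,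
        ← Finset.range_eq_Ico, Finset.sum_range_succ]
    rw [hsplit]
    have e1 : ∀ k ∈ Finset.range j,
        (m * (g (((k:ℝ) + 1) / m) - g ((k:ℝ) / m))) * ψ m k y
          = g (((k:ℝ) + 1) / m) - g ((k:ℝ) / m) := by
      intro k hk
      have hk' : k < j := Finset.mem_range.1 hk
      have : ((k:ℝ) + 1) / m ≤ y := by
        refine le_trans ?_ h1
        apply div_le_div_of_nonneg_right ?_ hmR.le
        exact_mod_cast Nat.succ_le_of_lt hk'
      rw [ψ_eq_full this]
      field_simp
    have e2 : ψ m j y = y - (j:ℝ) / m := ψ_eq_mid h1 h2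
    have e3 : ∀ k ∈ Finset.Ico (j+1) m,
        (m * (g (((k:ℝ) + 1) / m) - g ((k:ℝ) / m))) * ψ m k y = 0 := by
      intro k hk
      have hk' : j + 1 ≤ k := (Finset.mem_Ico.1 hk).1
      have : y ≤ (k:ℝ) / m := by
        refine h2.trans ?_
        apply div_le_div_of_nonneg_right ?_ hmR.le
        exact_mod_cast hk'
      rw [ψ_eq_zero this, mul_zero]
    rw [Finset.sum_congr rfl e1, Finset.sum_eq_zero e3, e2]
    have htel : ∑ k ∈ Finset.range j, (g (((k:ℝ) + 1) / m) - g ((k:ℝ) / m))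
        = g ((j:ℝ) / m) - g ((0:ℝ) / m) := by
      have := Finset.sum_range_sub (fun k => g ((k:ℝ) / m)) j
      simpa [Nat.cast_add, Nat.cast_one] using this
    rw [htel]
    simp
    ring
  rw [hGhat]
  have hspan : y - (j:ℝ) / m ≤ 1 / m := by
    have : ((j:ℝ) + 1) / m = (j:ℝ) / m + 1 / m := by ring
    linarith [this ▸ h2]
  have hspan0 : 0 ≤ y - (j:ℝ) / m := by linarith
  have hA : |g y - g ((j:ℝ) / m)| ≤ 1 / m := by
    refine (lip_abs_sub' hg y ((j:ℝ) / m)).trans ?_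
    rw [abs_of_nonneg hspan0]; exact hspan
  have hB : |(m * (g (((j:ℝ) + 1) / m) - g ((j:ℝ) / m))) * (y - (j:ℝ) / m)| ≤ 1 / m := by
    rw [abs_mul]
    calc |(m:ℝ) * (g (((j:ℝ) + 1) / m) - g ((j:ℝ) / m))| * |y - (j:ℝ) / m|
        ≤ 1 * |y - (j:ℝ) / m| :=
          mul_le_mul_of_nonneg_right (slope_abs_le hm hg j) (abs_nonneg _)
      _ ≤ 1 / m := by rw [one_mul, abs_of_nonneg hspan0]; exact hspan
  calc |g y - (g ((j:ℝ) / m)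
        + (m * (g (((j:ℝ) + 1) / m) - g ((j:ℝ) / m))) * (y - (j:ℝ) / m))|
      ≤ |g y - g ((j:ℝ) / m)|
        + |(m * (g (((j:ℝ) + 1) / m) - g ((j:ℝ) / m))) * (y - (j:ℝ) / m)| := by
        rw [sub_add_eq_sub_sub]; exact abs_sub _ _
    _ ≤ 1 / m + 1 / m := add_le_add hA hB
    _ = 2 / m := by ring


lemma ψ_integrable {μ : Measure ℝ} [IsProbabilityMeasure μ] (m k : ℕ) :
    Integrable (ψ m k) μ := by
  refine (integrable_const ((1:ℝ) / m)).mono'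
    (ψ_continuous m k).aestronglyMeasurable ?_
  refine Filter.Eventually.of_forall fun ξ => ?_
  rw [Real.norm_eq_abs, abs_of_nonneg (ψ_nonneg m k ξ)]
  exact ψ_le m k ξ

lemma abs_integral_ψ_le {μ : Measure ℝ} [IsProbabilityMeasure μ] (m k : ℕ) :
    |∫ ξ, ψ m k ξ ∂μ| ≤ 1 / m := by
  rw [abs_of_nonneg (integral_nonneg fun ξ => ψ_nonneg m k ξ)]
  calc ∫ ξ, ψ m k ξ ∂μ ≤ ∫ _ξ, (1:ℝ) / m ∂μ :=
        integral_mono_ae (ψ_integrable m k) (integrable_const _)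
          (Filter.Eventually.of_forall fun ξ => ψ_le m k ξ)
    _ = 1 / m := by simp

lemma Ghat_integrable {μ : Measure ℝ} [IsProbabilityMeasure μ] (m : ℕ) (g : ℝ → ℝ) :
    Integrable (Ghat m g) μ := by
  unfold Ghat
  refine (integrable_const (g 0)).add ?_
  refine integrable_finset_sum _ fun k _ => ?_
  exact (ψ_integrable m k).const_mul _

lemma Ghat_integral {μ : Measure ℝ} [IsProbabilityMeasure μ] (m : ℕ) (g : ℝ → ℝ) :
    ∫ ξ, Ghat m g ξ ∂μ = g 0 + ∑ k ∈ Finset.range m,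
      (m * (g (((k:ℝ) + 1) / m) - g ((k:ℝ) / m))) * ∫ ξ, ψ m k ξ ∂μ := by
  unfold Ghat
  rw [integral_add (integrable_const _)
    (integrable_finset_sum _ fun k _ => (ψ_integrable m k).const_mul _)]
  rw [integral_const]
  simp only [probReal_univ, smul_eq_mul, one_mul]
  congr 1
  rw [integral_finset_sum _ fun k _ => (ψ_integrable m k).const_mul _]
  exact Finset.sum_congr rfl fun k _ => integral_const_mul _ _

lemma alg_identity {n m : ℕ} (hn : (0:ℝ) < (n:ℝ)) (a S I : ℕ → ℝ) (c : ℝ) :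
    ((n:ℝ) * c + ∑ k ∈ Finset.range m, a k * S k) / n
      - (c + ∑ k ∈ Finset.range m, a k * I k)
      = ∑ k ∈ Finset.range m, a k * (S k / n - I k) := by
  rw [add_div]
  have h0 : ((n:ℝ) * c) / n = c := by field_simp
  rw [h0, Finset.sum_div]
  have h1 : ∀ k ∈ Finset.range m, (a k * S k) / (n:ℝ) = a k * (S k / n) :=
    fun k _ => mul_div_assoc _ _ _
  rw [Finset.sum_congr rfl h1]
  have h2 : ∀ k ∈ Finset.range m, a k * (S k / (n:ℝ) - I k)
      = a k * (S k / (n:ℝ)) - a k * I k := fun k _ => mul_sub _ _ _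
  rw [Finset.sum_congr rfl h2, Finset.sum_sub_distrib]
  ring

/-- Claim B : grid bound on the Kantorovich functional. -/
lemma Kfun_le_grid {μ : Measure ℝ} [IsProbabilityMeasure μ]
    (hsupp : ∀ᵐ ξ ∂μ, ξ ∈ Icc (0:ℝ) 1) {n m : ℕ} (hn : 1 ≤ n) (hm : 1 ≤ m)
    {z : Fin n → ℝ} (hz : ∀ i, z i ∈ Icc (0:ℝ) 1) :
    Kfun μ n z ≤ 4 / m + ∑ k ∈ Finset.range m,
      |(∑ i, ψ m k (z i)) / n - ∫ ξ, ψ m k ξ ∂μ| := by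
  have hnR : (0:ℝ) < (n:ℝ) := by exact_mod_cast hn
  have hmR : (0:ℝ) < (m:ℝ) := by exact_mod_cast hm
  refine csSup_le ⟨0, zero_mem_K μ n z⟩ ?_
  rintro r ⟨g, hg, rfl⟩
  -- step 1
  have step1 : (∑ i, g (z i)) / n ≤ (∑ i, Ghat m g (z i)) / n + 2 / m := by
    have : (∑ i, g (z i)) ≤ ∑ i, (Ghat m g (z i) + 2 / m) := by
      refine Finset.sum_le_sum fun i _ => ?_
      have := abs_le.1 (interp_err hm hg (hz i))
      linarith [this.2]
    rw [Finset.sum_add_distrib, Finset.sum_const, Finset.card_univ, Fintype.card_fin,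
      nsmul_eq_mul] at this
    rw [div_le_iff₀ hnR]
    have h2 : ((∑ i, Ghat m g (z i)) / n + 2 / m) * n
        = (∑ i, Ghat m g (z i)) + (n:ℝ) * (2 / m) := by field_simp
    rw [h2]; linarith
  -- step 2
  have step2 : ∫ ξ, Ghat m g ξ ∂μ - 2 / m ≤ ∫ ξ, g ξ ∂μ := by
    have : ∫ ξ, (Ghat m g ξ - 2 / m) ∂μ ≤ ∫ ξ, g ξ ∂μ := by
      refine integral_mono_ae ((Ghat_integrable m g).sub (integrable_const _))
        (lip_integrable hsupp hg) ?_
      filter_upwards [hsupp] with ξ hξ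
      have h := abs_le.1 (interp_err hm hg hξ)
      show Ghat m g ξ - 2 / ↑m ≤ g ξ
      linarith [h.1]
    rwa [integral_sub (Ghat_integrable m g) (integrable_const _), integral_const,
      probReal_univ, smul_eq_mul, one_mul] at this
  -- step 3
  have step3 : (∑ i, Ghat m g (z i)) / n - ∫ ξ, Ghat m g ξ ∂μ
      = ∑ k ∈ Finset.range m, (m * (g (((k:ℝ) + 1) / m) - g ((k:ℝ) / m)))
          * ((∑ i, ψ m k (z i)) / n - ∫ ξ, ψ m k ξ ∂μ) := by
    have hsum : (∑ i, Ghat m g (z i))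
        = (n:ℝ) * g 0 + ∑ k ∈ Finset.range m,
            (m * (g (((k:ℝ) + 1) / m) - g ((k:ℝ) / m))) * (∑ i, ψ m k (z i)) := by
      unfold Ghat
      rw [Finset.sum_add_distrib, Finset.sum_const, Finset.card_univ, Fintype.card_fin,
        nsmul_eq_mul]
      congr 1
      rw [Finset.sum_comm]
      exact Finset.sum_congr rfl fun k _ => by rw [Finset.mul_sum]
    rw [hsum, Ghat_integral]
    exact alg_identity hnR _ _ _ _
  -- step 4
  have step4 : ∑ k ∈ Finset.range m, (m * (g (((k:ℝ) + 1) / m) - g ((k:ℝ) / m)))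
        * ((∑ i, ψ m k (z i)) / n - ∫ ξ, ψ m k ξ ∂μ)
      ≤ ∑ k ∈ Finset.range m, |(∑ i, ψ m k (z i)) / n - ∫ ξ, ψ m k ξ ∂μ| := by
    refine Finset.sum_le_sum fun k _ => ?_
    calc (m * (g (((k:ℝ) + 1) / m) - g ((k:ℝ) / m)))
          * ((∑ i, ψ m k (z i)) / n - ∫ ξ, ψ m k ξ ∂μ)
        ≤ |(m * (g (((k:ℝ) + 1) / m) - g ((k:ℝ) / m)))
          * ((∑ i, ψ m k (z i)) / n - ∫ ξ, ψ m k ξ ∂μ)| := le_abs_self _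
      _ = |(m:ℝ) * (g (((k:ℝ) + 1) / m) - g ((k:ℝ) / m))|
          * |(∑ i, ψ m k (z i)) / n - ∫ ξ, ψ m k ξ ∂μ| := abs_mul _ _
      _ ≤ 1 * |(∑ i, ψ m k (z i)) / n - ∫ ξ, ψ m k ξ ∂μ| :=
          mul_le_mul_of_nonneg_right (slope_abs_le hm hg k) (abs_nonneg _)
      _ = _ := one_mul _
  have : (2:ℝ) / m + 2 / m = 4 / m := by ring
  linarith [step1, step2, step3 ▸ step4]

/-- integral against the empirical measure. -/
lemma emp_integral (T : ℝ → ℝ) (n : ℕ) (hn : 1 ≤ n) (x : ℝ) {g : ℝ → ℝ}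
    (hg : Continuous g) :
    ∫ ξ, g ξ ∂(((n : ENNReal))⁻¹ • ∑ j ∈ Finset.range n,
        MeasureTheory.Measure.dirac (T^[j] x))
      = (∑ i : Fin n, g (T^[(i:ℕ)] x)) / n := by
  have hint : ∀ j ∈ Finset.range n, Integrable g (Measure.dirac (T^[j] x)) := by
    intro j _
    refine ⟨hg.aestronglyMeasurable, ?_⟩
    rw [HasFiniteIntegral]
    rw [lintegral_dirac' _ hg.measurable.enorm]
    exact enorm_lt_top
  rw [integral_smul_measure, integral_finset_sum_measure hint]
  have : ∀ j ∈ Finset.range n, ∫ ξ, g ξ ∂(Measure.dirac (T^[j] x)) = g (T^[j] x) :=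
    fun j _ => integral_dirac g _
  rw [Finset.sum_congr rfl this, Fin.sum_univ_eq_sum_range (fun j => g (T^[j] x)) n]
  rw [ENNReal.toReal_inv, ENNReal.toReal_natCast, smul_eq_mul]
  ring

/-- L¹–L² bound via AM–GM: if `∫ u² ≤ V` then `∫ |u| ≤ √V` (probability measure). -/
lemma l1_le_sqrt_l2 {μ : Measure ℝ} [IsProbabilityMeasure μ] {u : ℝ → ℝ} {V : ℝ}
    (hV : 0 < V) (hu : Integrable u μ) (hu2 : Integrable (fun x => u x ^ 2) μ)
    (h2 : ∫ x, u x ^ 2 ∂μ ≤ V) : ∫ x, |u x| ∂μ ≤ Real.sqrt V := by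
  have hs : 0 < Real.sqrt V := Real.sqrt_pos.2 hV
  have hsq : Real.sqrt V * Real.sqrt V = V := Real.mul_self_sqrt hV.le
  have hpt : ∀ x, |u x| ≤ u x ^ 2 / (2 * Real.sqrt V) + Real.sqrt V / 2 := by
    intro x
    rw [div_add_div _ _ (by positivity) (by norm_num : (2:ℝ) ≠ 0), le_div_iff₀ (by positivity)]
    nlinarith [sq_nonneg (|u x| - Real.sqrt V), sq_abs (u x)]
  calc ∫ x, |u x| ∂μ ≤ ∫ x, (u x ^ 2 / (2 * Real.sqrt V) + Real.sqrt V / 2) ∂μ := by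
        refine integral_mono_ae hu.abs ?_ (Filter.Eventually.of_forall hpt)
        exact (hu2.div_const _).add (integrable_const _)
    _ = (∫ x, u x ^ 2 ∂μ) / (2 * Real.sqrt V) + Real.sqrt V / 2 := by
        rw [integral_add (hu2.div_const _) (integrable_const _), integral_div,
          integral_const, probReal_univ, smul_eq_mul, one_mul]
    _ ≤ V / (2 * Real.sqrt V) + Real.sqrt V / 2 := by
        gcongr
    _ = Real.sqrt V := by
        rw [div_add_div _ _ (by positivity) (by norm_num : (2:ℝ) ≠ 0)]
        field_simp
        nlinarith [hsq]


lemma kant_eq (T : ℝ → ℝ) (μ : Measure ℝ) (n : ℕ) (hn : 1 ≤ n) (x : ℝ) :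
    kantorovichDist (empiricalMeasure T n x) μ
      = Kfun μ n (fun i : Fin n => T^[(i:ℕ)] x) := by
  unfold kantorovichDist Kfun empiricalMeasure
  congr 1
  ext r
  constructor
  · rintro ⟨g, hg, rfl⟩
    exact ⟨g, hg, by rw [emp_integral T n hn x hg.continuous]⟩
  · rintro ⟨g, hg, rfl⟩
    exact ⟨g, hg, by rw [emp_integral T n hn x hg.continuous]⟩

/-- componentwise Lipschitz for the grid averages. -/
lemma sumdiv_comp_lip {n : ℕ} {φ : ℝ → ℝ} (hφ : LipschitzWith 1 φ)
    (j : Fin n) (z zz : Fin n → ℝ) (hzz : ∀ i, i ≠ j → z i = zz i) :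
    |(∑ i, φ (z i)) / n - (∑ i, φ (zz i)) / n| ≤ (1 / n) * |z j - zz j| := by
  rcases Nat.eq_zero_or_pos n with h0 | hpos
  · subst h0; simp
  have hnR : (0:ℝ) < (n:ℝ) := by exact_mod_cast hpos
  rw [div_sub_div_same, ← Finset.sum_sub_distrib]
  have : (∑ i, (φ (z i) - φ (zz i))) = φ (z j) - φ (zz j) := by
    rw [Finset.sum_eq_single j]
    · intro i _ hij; rw [hzz i hij]; simp
    · simp
  rw [this, abs_div, abs_of_pos hnR, one_div, div_eq_inv_mul]
  refine mul_le_mul_of_nonneg_left ?_ (inv_nonneg.2 hnR.le)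
  have := hφ.dist_le_mul (z j) (zz j)
  simpa [Real.dist_eq] using this


end EmpAux

open EmpAux

/-- **Speed of convergence of the empirical measure** in Kantorovich distance
for the intermittent interval map: there is `C > 0` such that for all `t > 0`
and `n ≥ 1`, `μ{x : κ(ℰ_n(x),μ) > t + C n^{-1/4}} ≤ D/(n t²)`. -/
theorem empirical_measure_speed_intermittent_map
    (α : ℝ) (hα0 : 0 < α) (hα1 : α < 4 - Real.sqrt 15)
    (T : ℝ → ℝ) (hT_maps : MapsTo T (Icc (0:ℝ) 1) (Icc (0:ℝ) 1))
    (hT_formula : ∀ x ∈ Ico (0:ℝ) (1/2), T x = x + (2:ℝ) ^ α * x ^ (1 + α))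
    (T' : ℝ → ℝ)
    (hT_deriv : ∀ x ∈ Icc (1/2:ℝ) 1, HasDerivWithinAt T (T' x) (Icc (1/2:ℝ) 1) x)
    (hT_C2 : ContDiffOn ℝ 2 T (Icc (1/2:ℝ) 1))
    (hT_bij : BijOn T (Icc (1/2:ℝ) 1) (Icc (0:ℝ) 1))
    (hT_expanding : ∀ x ∈ Icc (1/2:ℝ) 1, 1 < |T' x|)
    (h : ℝ → ℝ) (c₁ c₂ : ℝ) (hc₁ : 0 < c₁) (hc₁₂ : c₁ ≤ c₂)
    (hdens : ∀ x ∈ Ioc (0:ℝ) 1, c₁ * x ^ (-α) ≤ h x ∧ h x ≤ c₂ * x ^ (-α))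
    (μ : Measure ℝ) (hprob : IsProbabilityMeasure μ)
    (hμ : μ = (volume.restrict (Icc (0:ℝ) 1)).withDensity (fun x => ENNReal.ofReal (h x)))
    (hinv : MeasurePreserving T μ μ)
    -- variance (Devroye) inequality
    (D : ℝ) (hD : 0 < D)
    (hvar : ∀ n : ℕ, 1 ≤ n → ∀ (K : (Fin n → ℝ) → ℝ) (L : Fin n → ℝ),
      (∀ (j : Fin n) (z zz : Fin n → ℝ), (∀ i, i ≠ j → z i = zz i) →
        |K z - K zz| ≤ L j * |z j - zz j|) →
      ∫ x, (K (fun i => T^[(i:ℕ)] x) - ∫ y, K (fun i => T^[(i:ℕ)] y) ∂μ) ^ 2 ∂μ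
        ≤ D * ∑ j, (L j) ^ 2) :
    ∃ C > (0:ℝ), ∀ t : ℝ, 0 < t → ∀ n : ℕ, 1 ≤ n →
      μ {x | x ∈ Icc (0:ℝ) 1 ∧
          kantorovichDist (empiricalMeasure T n x) μ > t + C / (n : ℝ) ^ ((1:ℝ)/4)}
        ≤ ENNReal.ofReal (D / (n * t ^ 2)) := by
  haveI := hprob
  have hsupp : ∀ᵐ ξ ∂μ, ξ ∈ Icc (0:ℝ) 1 := by
    have hz : μ (Icc (0:ℝ) 1)ᶜ = 0 := by
      rw [hμ, withDensity_apply _ measurableSet_Icc.compl,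
        Measure.restrict_restrict measurableSet_Icc.compl, Set.compl_inter_self,
        Measure.restrict_empty, lintegral_zero_measure]
    have he : {a : ℝ | ¬ a ∈ Icc (0:ℝ) 1} = (Icc (0:ℝ) 1)ᶜ := rfl
    exact ae_iff.2 (he ▸ hz)
  refine ⟨4 + 2 * Real.sqrt D, by positivity, ?_⟩
  intro t ht n hn
  have hnR : (0:ℝ) < (n:ℝ) := by exact_mod_cast hn
  set β : ℝ := (n : ℝ) ^ ((1:ℝ)/4) with hβdef
  have hβ1 : 1 ≤ β := Real.one_le_rpow (by exact_mod_cast hn) (by norm_num)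
  have hβ0 : 0 < β := lt_of_lt_of_le one_pos hβ1
  set m : ℕ := ⌈β⌉₊ with hmdef
  have hm : 1 ≤ m := Nat.one_le_ceil_iff.2 hβ0
  have hmR : (0:ℝ) < (m:ℝ) := by exact_mod_cast hm
  have hmβ : β ≤ (m:ℝ) := Nat.le_ceil β
  have hmβ2 : (m:ℝ) ≤ 2 * β := by
    have h1 : ((m:ℕ):ℝ) < β + 1 := Nat.ceil_lt_add_one hβ0.le
    linarith
  -- orbit-in-box a.e.
  have hbox : ∀ᵐ x ∂μ, ∀ i : Fin n, T^[(i:ℕ)] x ∈ Icc (0:ℝ) 1 := by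
    filter_upwards [hsupp] with x hx i
    exact hT_maps.iterate (i:ℕ) hx
  -- f and its basic properties
  set f : ℝ → ℝ := fun x => Kfun μ n (fun i : Fin n => T^[(i:ℕ)] x) with hfdef
  have horb : Measurable fun x : ℝ => (fun i : Fin n => T^[(i:ℕ)] x) :=
    measurable_pi_lambda _ fun i => hinv.measurable.iterate (i:ℕ)
  have hfmeas : Measurable f :=
    ((Kfun_lipschitz hsupp hn).continuous.measurable).comp horb
  have hfbdd : ∀ᵐ x ∂μ, ‖f x‖ ≤ 2 := by
    filter_upwards [hbox] with x hx
    rw [Real.norm_eq_abs, abs_of_nonneg (Kfun_nonneg hsupp hn _)]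
    exact Kfun_le_two hsupp hn hx
  have hfint : Integrable f μ :=
    (integrable_const 2).mono' hfmeas.aestronglyMeasurable hfbdd
  set E : ℝ := ∫ y, Kfun μ n (fun i : Fin n => T^[(i:ℕ)] y) ∂μ with hEdef
  -- the grid deviation functions
  set Δ : ℕ → ℝ → ℝ := fun k x => (∑ i : Fin n, ψ m k (T^[(i:ℕ)] x)) / n
      - ∫ ξ, ψ m k ξ ∂μ with hΔdef
  have hΔmeas : ∀ k, Measurable (Δ k) := by
    intro k
    apply Measurable.sub ?_ measurable_const
    apply Measurable.div_const
    exact Finset.measurable_sum _ fun i _ =>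
      (ψ_continuous m k).measurable.comp (hinv.measurable.iterate (i:ℕ))
  have hΔbdd : ∀ k x, |Δ k x| ≤ 2 / m := by
    intro k x
    have h1 : 0 ≤ (∑ i : Fin n, ψ m k (T^[(i:ℕ)] x)) / n :=
      div_nonneg (Finset.sum_nonneg fun i _ => ψ_nonneg m k _) hnR.le
    have h2 : (∑ i : Fin n, ψ m k (T^[(i:ℕ)] x)) / n ≤ 1 / m := by
      rw [div_le_iff₀ hnR]
      calc (∑ i : Fin n, ψ m k (T^[(i:ℕ)] x)) ≤ ∑ _i : Fin n, (1:ℝ)/m :=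
            Finset.sum_le_sum fun i _ => ψ_le m k _
        _ = (n:ℝ) * (1/m) := by simp [mul_comm]
        _ = 1 / m * n := by ring
    have h3 := abs_le.1 (abs_integral_ψ_le (μ := μ) m k)
    have e : Δ k x = (∑ i : Fin n, ψ m k (T^[(i:ℕ)] x)) / n - ∫ ξ, ψ m k ξ ∂μ := rfl
    have h4 : (0:ℝ) < 1 / m := by positivity
    have h5 : (2:ℝ)/m = 2*(1/m) := by ring
    rw [e, abs_le]
    constructor
    · linarith [h3.2]
    · linarith [h3.1]
  have hΔint : ∀ k, Integrable (Δ k) μ := fun k =>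
    (integrable_const (2/(m:ℝ))).mono' (hΔmeas k).aestronglyMeasurable
      (Filter.Eventually.of_forall fun x => by
        rw [Real.norm_eq_abs]; exact hΔbdd k x)
  have hΔsqint : ∀ k, Integrable (fun x => Δ k x ^ 2) μ := fun k =>
    (integrable_const ((2/(m:ℝ))^2)).mono' ((hΔmeas k).pow_const 2).aestronglyMeasurable
      (Filter.Eventually.of_forall fun x => by
        rw [Real.norm_eq_abs, abs_pow, sq_abs, ← sq_abs]
        exact pow_le_pow_left₀ (abs_nonneg _) (hΔbdd k x) 2)
  -- mean of the grid averages
  have hmean : ∀ k, ∫ y, (∑ i : Fin n, ψ m k (T^[(i:ℕ)] y)) / n ∂μ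
      = ∫ ξ, ψ m k ξ ∂μ := by
    intro k
    have hterm : ∀ i : Fin n, ∫ y, ψ m k (T^[(i:ℕ)] y) ∂μ = ∫ ξ, ψ m k ξ ∂μ := by
      intro i
      have hmp := hinv.iterate (i:ℕ)
      calc ∫ y, ψ m k (T^[(i:ℕ)] y) ∂μ
          = ∫ ξ, ψ m k ξ ∂(Measure.map (T^[(i:ℕ)]) μ) :=
            (integral_map hmp.measurable.aemeasurable
              ((ψ_continuous m k).aestronglyMeasurable)).symm
        _ = ∫ ξ, ψ m k ξ ∂μ := by rw [hmp.map_eq]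
    have hintterm : ∀ i : Fin n, Integrable (fun y => ψ m k (T^[(i:ℕ)] y)) μ := by
      intro i
      have hme : Measurable fun y => ψ m k (T^[(i:ℕ)] y) :=
        (ψ_continuous m k).measurable.comp (hinv.measurable.iterate (i:ℕ))
      refine (integrable_const ((1:ℝ)/m)).mono' hme.aestronglyMeasurable ?_
      refine Filter.Eventually.of_forall fun y => ?_
      rw [Real.norm_eq_abs, abs_of_nonneg (ψ_nonneg m k _)]
      exact ψ_le m k _
    rw [integral_div]
    rw [integral_finset_sum _ fun i _ => hintterm i]
    rw [Finset.sum_congr rfl fun i _ => hterm i]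
    rw [Finset.sum_const, Finset.card_univ, Fintype.card_fin, nsmul_eq_mul]
    field_simp
  -- variance bound for each grid function
  have hvar_k : ∀ k, ∫ x, Δ k x ^ 2 ∂μ ≤ D / n := by
    intro k
    have hlip := fun (j : Fin n) (z zz : Fin n → ℝ) (hzz : ∀ i, i ≠ j → z i = zz i) =>
      sumdiv_comp_lip (ψ_lip m k) j z zz hzz
    have := hvar n hn (fun z => (∑ i, ψ m k (z i)) / n) (fun _ => 1/(n:ℝ)) hlip
    have hsum : D * ∑ _j : Fin n, (1/(n:ℝ))^2 = D / n := by
      rw [Finset.sum_const, Finset.card_univ, Fintype.card_fin, nsmul_eq_mul]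
      field_simp
    rw [hsum] at this
    calc ∫ x, Δ k x ^ 2 ∂μ
        = ∫ x, ((∑ i : Fin n, ψ m k (T^[(i:ℕ)] x)) / n
            - ∫ y, (∑ i : Fin n, ψ m k (T^[(i:ℕ)] y)) / n ∂μ) ^ 2 ∂μ := by
          rw [hΔdef]
          congr 1
          ext x
          rw [hmean k]
      _ ≤ D / n := this
  -- L¹ bound for each grid function
  have hl1 : ∀ k, ∫ x, |Δ k x| ∂μ ≤ Real.sqrt (D / n) := fun k =>
    l1_le_sqrt_l2 (by positivity) (hΔint k) (hΔsqint k) (hvar_k k)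
  -- expectation bound
  have hEbound : E ≤ (4 + 2 * Real.sqrt D) / β := by
    have hfub : ∀ᵐ x ∂μ, f x ≤ 4 / m + ∑ k ∈ Finset.range m, |Δ k x| := by
      filter_upwards [hbox] with x hx
      exact Kfun_le_grid hsupp hn hm hx
    have hRint : Integrable (fun x => 4 / (m:ℝ) + ∑ k ∈ Finset.range m, |Δ k x|) μ :=
      (integrable_const _).add (integrable_finset_sum _ fun k _ => (hΔint k).abs)
    have h1 : E ≤ ∫ x, (4 / (m:ℝ) + ∑ k ∈ Finset.range m, |Δ k x|) ∂μ :=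
      integral_mono_ae hfint hRint hfub
    have h2 : ∫ x, (4 / (m:ℝ) + ∑ k ∈ Finset.range m, |Δ k x|) ∂μ
        = 4 / m + ∑ k ∈ Finset.range m, ∫ x, |Δ k x| ∂μ := by
      rw [integral_add (integrable_const _)
        (integrable_finset_sum _ fun k _ => (hΔint k).abs), integral_const,
        probReal_univ, smul_eq_mul, one_mul,
        integral_finset_sum _ fun k _ => (hΔint k).abs]
    have h3 : ∑ k ∈ Finset.range m, ∫ x, |Δ k x| ∂μ ≤ (m:ℝ) * Real.sqrt (D / n) := by
      calc ∑ k ∈ Finset.range m, ∫ x, |Δ k x| ∂μ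
          ≤ ∑ _k ∈ Finset.range m, Real.sqrt (D / n) :=
            Finset.sum_le_sum fun k _ => hl1 k
        _ = (m:ℝ) * Real.sqrt (D / n) := by
            rw [Finset.sum_const, Finset.card_range, nsmul_eq_mul]
    -- convert to β
    have hββ : β * β = Real.sqrt n := by
      rw [hβdef, ← Real.rpow_add hnR, Real.sqrt_eq_rpow]
      norm_num
    have hsqrtn : (0:ℝ) < Real.sqrt n := Real.sqrt_pos.2 hnR
    have h4 : (4:ℝ) / m ≤ 4 / β := by
      apply div_le_div_of_nonneg_left (by norm_num) hβ0 hmβ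
    have h5 : (m:ℝ) * Real.sqrt (D / n) ≤ 2 * Real.sqrt D / β := by
      have hsd : Real.sqrt (D / n) = Real.sqrt D / Real.sqrt n :=
        Real.sqrt_div hD.le n
      have hβne : β ≠ 0 := hβ0.ne'
      have heq : 2 * β * (Real.sqrt D / Real.sqrt n) = 2 * Real.sqrt D / β := by
        rw [← hββ]
        field_simp
      calc (m:ℝ) * Real.sqrt (D / n) = (m:ℝ) * (Real.sqrt D / Real.sqrt n) := by
            rw [hsd]
        _ ≤ (2 * β) * (Real.sqrt D / Real.sqrt n) :=
            mul_le_mul_of_nonneg_right hmβ2 (by positivity)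
        _ = 2 * Real.sqrt D / β := heq
    have hsplit : (4 + 2 * Real.sqrt D) / β = 4 / β + 2 * Real.sqrt D / β :=
      add_div _ _ _
    rw [h2] at h1
    rw [hsplit]
    linarith [h1, h3, h4, h5]
  -- Chebyshev
  have hvarf0 := hvar n hn (Kfun μ n) (fun _ => 1/(n:ℝ))
    (fun j z zz hzz => Kfun_comp_lip hsupp hn j z zz hzz)
  have hsumv : D * ∑ _j : Fin n, (1/(n:ℝ))^2 = D / n := by
    rw [Finset.sum_const, Finset.card_univ, Fintype.card_fin, nsmul_eq_mul]
    field_simp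
  rw [hsumv] at hvarf0
  have hvarf : ∫ x, (f x - E)^2 ∂μ ≤ D / n := hvarf0
  have hsqint : Integrable (fun x => (f x - E)^2) μ := by
    refine (integrable_const ((2 + |E|)^2)).mono'
      ((hfmeas.sub measurable_const).pow_const 2).aestronglyMeasurable ?_
    filter_upwards [hfbdd] with x hx
    rw [Real.norm_eq_abs, abs_pow, sq_abs, ← sq_abs]
    refine pow_le_pow_left₀ (abs_nonneg _) ?_ 2
    rw [Real.norm_eq_abs] at hx
    calc |f x - E| ≤ |f x| + |E| := abs_sub _ _
      _ ≤ 2 + |E| := by linarith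
  have hcheb := mul_meas_ge_le_integral_of_nonneg
    (Filter.Eventually.of_forall fun x => sq_nonneg (f x - E)) hsqint (t^2)
  have htoReal : (μ {x | t^2 ≤ (f x - E)^2}).toReal ≤ D / (n * t^2) := by
    have ht2 : (0:ℝ) < t^2 := pow_pos ht 2
    rw [← div_div]
    rw [le_div_iff₀ ht2]
    calc (μ {x | t^2 ≤ (f x - E)^2}).toReal * t^2
        = t^2 * (μ {x | t^2 ≤ (f x - E)^2}).toReal := mul_comm _ _
      _ ≤ ∫ x, (f x - E)^2 ∂μ := hcheb
      _ ≤ D / n := hvarf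
  have hsub : {x | x ∈ Icc (0:ℝ) 1 ∧
      kantorovichDist (empiricalMeasure T n x) μ > t + (4 + 2 * Real.sqrt D) / β}
      ⊆ {x | t^2 ≤ (f x - E)^2} := by
    intro x hx
    obtain ⟨hx1, hx2⟩ := hx
    rw [kant_eq T μ n hn x] at hx2
    have hfx : f x > t + (4 + 2 * Real.sqrt D) / β := hx2
    have hle : t ≤ f x - E := by linarith [hEbound]
    show t^2 ≤ (f x - E)^2
    exact pow_le_pow_left₀ ht.le hle 2
  calc μ {x | x ∈ Icc (0:ℝ) 1 ∧
        kantorovichDist (empiricalMeasure T n x) μ > t + (4 + 2 * Real.sqrt D) / β}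
      ≤ μ {x | t^2 ≤ (f x - E)^2} := measure_mono hsub
    _ ≤ ENNReal.ofReal (D / (n * t^2)) :=
        (ENNReal.le_ofReal_iff_toReal_le (measure_ne_top μ _) (by positivity)).2 htoReal
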